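/- Let G be a group, T : ℤ → G a family of elements, and c ∈ G an element such that T(a) · T(a+1) = c for every a ∈ ℤ. Fix a₀ ∈ ℤ. Then every element g of the subgroup of G generated by { T(x) : x ∈ ℤ } can be written either in the form g = c^m · s or in the form g = c^m · T(a₀) · s, where m ∈ ℤ and s belongs to the subgroup of G generated by the squares { T(x)² : x ∈ ℤ }. -/

import Mathlib

section Aux

variable {G : Type*} [Group G] (T : ℤ → G) (c : G)

private lemma aux_cc (h : ∀ x : ℤ, T x * T (x + 1) = c) (y : ℤ) :
    c⁻¹ * T y * c = T (y + 2) := by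
  have h2 := h (y + 1)
  have e2 : T (y + 1 + 1) = (T (y + 1))⁻¹ * c := by rw [← h2]; group
  have e1 : T (y + 1) = (T y)⁻¹ * c := by rw [← h y]; group
  rw [show y + 2 = y + 1 + 1 by ring, e2, e1]
  group

private lemma aux_ccsq (h : ∀ x : ℤ, T x * T (x + 1) = c) (y : ℤ) :
    c⁻¹ * T y ^ 2 * c = T (y + 2) ^ 2 := by
  have e : c⁻¹ * T y ^ 2 * c = (c⁻¹ * T y * c) ^ 2 := by
    simp only [pow_two]; group
  rw [e, aux_cc T c h y]

private lemma aux_ccsq' (h : ∀ x : ℤ, T x * T (x + 1) = c) (y : ℤ) :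
    c * T y ^ 2 * c⁻¹ = T (y - 2) ^ 2 := by
  have e := aux_ccsq T c h (y - 2)
  rw [show y - 2 + 2 = y by ring] at e
  rw [← e]; group

end Aux

/-- Abstract form of the first assertion of Corollary 2.13 (normal form of elements of
the group `B` generated by the spherical twists): assuming the relation
`T a * T (a+1) = c` for all `a : ℤ`, every element of the subgroup generated by the
`T x` is of the form `c ^ m * s` or `c ^ m * T a₀ * s` with `s` in the subgroup
generated by the squares `T x ^ 2`. -/
theorem stmt_3 {G : Type*} [Group G] (T : ℤ → G) (c : G)
    (h : ∀ x : ℤ, T x * T (x + 1) = c) (a₀ : ℤ)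
    (g : G) (hg : g ∈ Subgroup.closure (Set.range T)) :
    ∃ (m : ℤ) (s : G), s ∈ Subgroup.closure { x : G | ∃ y : ℤ, x = T y ^ 2 } ∧
      (g = c ^ m * s ∨ g = c ^ m * T a₀ * s) := by
  set S : Subgroup G := Subgroup.closure { x : G | ∃ y : ℤ, x = T y ^ 2 } with hS
  -- squares are in S
  have sq_mem : ∀ y : ℤ, T y ^ 2 ∈ S := fun y => Subgroup.subset_closure ⟨y, rfl⟩
  have ccsq := aux_ccsq T c h
  have ccsq' := aux_ccsq' T c h
  -- conjugation by c and c⁻¹ preserves S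
  have csconj1 : ∀ s ∈ S, c⁻¹ * s * c ∈ S := by
    intro s hs
    induction hs using Subgroup.closure_induction with
    | mem x hx =>
      obtain ⟨y, rfl⟩ := hx
      rw [ccsq y]; exact sq_mem _
    | one =>
      have e : c⁻¹ * (1 : G) * c = 1 := by group
      rw [e]; exact S.one_mem
    | mul x y _ _ px py =>
      have e : c⁻¹ * (x * y) * c = (c⁻¹ * x * c) * (c⁻¹ * y * c) := by group
      rw [e]; exact S.mul_mem px py
    | inv x _ px =>
      have e : c⁻¹ * x⁻¹ * c = (c⁻¹ * x * c)⁻¹ := by group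
      rw [e]; exact S.inv_mem px
  have csconj2 : ∀ s ∈ S, c * s * c⁻¹ ∈ S := by
    intro s hs
    induction hs using Subgroup.closure_induction with
    | mem x hx =>
      obtain ⟨y, rfl⟩ := hx
      rw [ccsq' y]; exact sq_mem _
    | one =>
      have e : c * (1 : G) * c⁻¹ = 1 := by group
      rw [e]; exact S.one_mem
    | mul x y _ _ px py =>
      have e : c * (x * y) * c⁻¹ = (c * x * c⁻¹) * (c * y * c⁻¹) := by group
      rw [e]; exact S.mul_mem px py
    | inv x _ px =>
      have e : c * x⁻¹ * c⁻¹ = (c * x * c⁻¹)⁻¹ := by group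
      rw [e]; exact S.inv_mem px
  -- conjugation by powers of c preserves S
  have cpow_conj : ∀ k : ℤ, ∀ u ∈ S, c ^ k * u * (c ^ k)⁻¹ ∈ S := by
    intro k
    induction k using Int.induction_on with
    | zero => intro u hu; simpa using hu
    | succ k ih =>
      intro u hu
      have e : c ^ ((k : ℤ) + 1) * u * (c ^ ((k : ℤ) + 1))⁻¹
          = c ^ (k : ℤ) * (c * u * c⁻¹) * (c ^ (k : ℤ))⁻¹ := by group
      rw [e]; exact ih _ (csconj2 u hu)
    | pred k ih =>
      intro u hu
      have e : c ^ (-(k : ℤ) - 1) * u * (c ^ (-(k : ℤ) - 1))⁻¹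
          = c ^ (-(k : ℤ)) * (c⁻¹ * u * c) * (c ^ (-(k : ℤ)))⁻¹ := by group
      rw [e]; exact ih _ (csconj1 u hu)
  -- conjugation of a square by T a lands in S
  have conj_gen : ∀ d : ℤ, ∀ a : ℤ, T a * T (a + d) ^ 2 * (T a)⁻¹ ∈ S := by
    intro d
    induction d using Int.induction_on with
    | zero =>
      intro a
      have e : T a * T (a + 0) ^ 2 * (T a)⁻¹ = T a ^ 2 := by
        rw [add_zero]; group
      rw [e]; exact sq_mem a
    | succ k ih =>
      intro a
      -- T a = (T (a-1))⁻¹ * c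
      have e1 : T a = (T (a - 1))⁻¹ * c := by
        have := h (a - 1)
        rw [show a - 1 + 1 = a by ring] at this
        rw [← this]; group
      have e2 : T (a + ((k : ℤ) + 1)) ^ 2 = c⁻¹ * T (a - 1 + (k : ℤ)) ^ 2 * c := by
        have := ccsq (a - 1 + (k : ℤ))
        rw [show a - 1 + (k : ℤ) + 2 = a + ((k : ℤ) + 1) by ring] at this
        rw [this]
      have key : T a * T (a + ((k : ℤ) + 1)) ^ 2 * (T a)⁻¹
          = (T (a - 1) ^ 2)⁻¹ * (T (a - 1) * T (a - 1 + (k : ℤ)) ^ 2 * (T (a - 1))⁻¹)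
            * T (a - 1) ^ 2 := by
        rw [e2, e1]; group
      rw [key]
      exact S.mul_mem (S.mul_mem (S.inv_mem (sq_mem _)) (ih (a - 1))) (sq_mem _)
    | pred k ih =>
      intro a
      have e1 : T a = c * (T (a + 1))⁻¹ := by
        rw [← h a]; group
      have e2 : T (a + (-(k : ℤ) - 1)) ^ 2 = c * T (a + 1 + -(k : ℤ)) ^ 2 * c⁻¹ := by
        have := ccsq (a + (-(k : ℤ) - 1))
        rw [show a + (-(k : ℤ) - 1) + 2 = a + 1 + -(k : ℤ) by ring] at this
        rw [← this]; group
      have key : T a * T (a + (-(k : ℤ) - 1)) ^ 2 * (T a)⁻¹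
          = T a ^ 2 * (T (a + 1) * T (a + 1 + -(k : ℤ)) ^ 2 * (T (a + 1))⁻¹)
            * (T a ^ 2)⁻¹ := by
        rw [e2, e1]; simp only [pow_two]; group
      rw [key]
      exact S.mul_mem (S.mul_mem (sq_mem _) (ih (a + 1))) (S.inv_mem (sq_mem _))
  have conj_sq : ∀ a y : ℤ, T a * T y ^ 2 * (T a)⁻¹ ∈ S := by
    intro a y
    have := conj_gen (y - a) a
    rwa [show a + (y - a) = y by ring] at this
  have conj_sq_inv : ∀ a y : ℤ, (T a)⁻¹ * T y ^ 2 * T a ∈ S := by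
    intro a y
    have e1 : T a = c * (T (a + 1))⁻¹ := by rw [← h a]; group
    have e2 : T y ^ 2 = c * T (y + 2) ^ 2 * c⁻¹ := by rw [← ccsq y]; group
    have key : (T a)⁻¹ * T y ^ 2 * T a
        = T (a + 1) * T (y + 2) ^ 2 * (T (a + 1))⁻¹ := by
      rw [e2, e1]; group
    rw [key]; exact conj_sq (a + 1) (y + 2)
  -- conjugation by T a (both ways) preserves S
  have tconj : ∀ a : ℤ, ∀ s ∈ S, T a * s * (T a)⁻¹ ∈ S := by
    intro a s hs
    induction hs using Subgroup.closure_induction with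
    | mem x hx =>
      obtain ⟨y, rfl⟩ := hx
      exact conj_sq a y
    | one =>
      have e : T a * (1 : G) * (T a)⁻¹ = 1 := by group
      rw [e]; exact S.one_mem
    | mul x y _ _ px py =>
      have e : T a * (x * y) * (T a)⁻¹ = (T a * x * (T a)⁻¹) * (T a * y * (T a)⁻¹) := by
        group
      rw [e]; exact S.mul_mem px py
    | inv x _ px =>
      have e : T a * x⁻¹ * (T a)⁻¹ = (T a * x * (T a)⁻¹)⁻¹ := by group
      rw [e]; exact S.inv_mem px
  have tconj_inv : ∀ a : ℤ, ∀ s ∈ S, (T a)⁻¹ * s * T a ∈ S := by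
    intro a s hs
    induction hs using Subgroup.closure_induction with
    | mem x hx =>
      obtain ⟨y, rfl⟩ := hx
      exact conj_sq_inv a y
    | one =>
      have e : (T a)⁻¹ * (1 : G) * T a = 1 := by group
      rw [e]; exact S.one_mem
    | mul x y _ _ px py =>
      have e : (T a)⁻¹ * (x * y) * T a = ((T a)⁻¹ * x * T a) * ((T a)⁻¹ * y * T a) := by
        group
      rw [e]; exact S.mul_mem px py
    | inv x _ px =>
      have e : (T a)⁻¹ * x⁻¹ * T a = ((T a)⁻¹ * x * T a)⁻¹ := by group
      rw [e]; exact S.inv_mem px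
  -- commuting T a₀ past c
  have eqp1 : T (a₀ + 1) = (T a₀)⁻¹ * c := by rw [← h a₀]; group
  have eqm1 : T (a₀ - 1) = c * (T a₀)⁻¹ := by
    have := h (a₀ - 1)
    rw [show a₀ - 1 + 1 = a₀ by ring] at this
    rw [← this]; group
  have eqm2 : T (a₀ - 2) = c * (T (a₀ - 1))⁻¹ := by
    have := h (a₀ - 2)
    rw [show a₀ - 2 + 1 = a₀ - 1 by ring] at this
    rw [← this]; group
  have htc1 : T a₀ * c = c⁻¹ * (T (a₀ - 2) ^ 2 * T (a₀ - 1) ^ 2) * T a₀ := by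
    rw [eqm2, eqm1]; simp only [pow_two]; group
  have htc1' : T a₀ * c⁻¹ = c * ((T (a₀ + 1) ^ 2)⁻¹ * (T a₀ ^ 2)⁻¹) * T a₀ := by
    rw [eqp1]; simp only [pow_two]; group
  have hs0 : T (a₀ - 2) ^ 2 * T (a₀ - 1) ^ 2 ∈ S := S.mul_mem (sq_mem _) (sq_mem _)
  have hs0' : (T (a₀ + 1) ^ 2)⁻¹ * (T a₀ ^ 2)⁻¹ ∈ S :=
    S.mul_mem (S.inv_mem (sq_mem _)) (S.inv_mem (sq_mem _))
  have tck : ∀ k : ℤ, ∃ s ∈ S, T a₀ * c ^ k = c ^ (-k) * s * T a₀ := by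
    intro k
    induction k using Int.induction_on with
    | zero => exact ⟨1, S.one_mem, by simp⟩
    | succ k ih =>
      obtain ⟨s, hs, e⟩ := ih
      refine ⟨(c * s * c⁻¹) * (T (a₀ - 2) ^ 2 * T (a₀ - 1) ^ 2),
        S.mul_mem (csconj2 s hs) hs0, ?_⟩
      calc T a₀ * c ^ ((k : ℤ) + 1) = (T a₀ * c ^ (k : ℤ)) * c := by group
        _ = (c ^ (-(k : ℤ)) * s * T a₀) * c := by rw [e]
        _ = c ^ (-(k : ℤ)) * s * (T a₀ * c) := by group
        _ = c ^ (-(k : ℤ)) * s * (c⁻¹ * (T (a₀ - 2) ^ 2 * T (a₀ - 1) ^ 2) * T a₀) := by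
            rw [htc1]
        _ = c ^ (-((k : ℤ) + 1)) * ((c * s * c⁻¹) * (T (a₀ - 2) ^ 2 * T (a₀ - 1) ^ 2))
            * T a₀ := by group
    | pred k ih =>
      obtain ⟨s, hs, e⟩ := ih
      refine ⟨(c⁻¹ * s * c) * ((T (a₀ + 1) ^ 2)⁻¹ * (T a₀ ^ 2)⁻¹),
        S.mul_mem (csconj1 s hs) hs0', ?_⟩
      calc T a₀ * c ^ (-(k : ℤ) - 1) = (T a₀ * c ^ (-(k : ℤ))) * c⁻¹ := by group
        _ = (c ^ (-(-(k : ℤ))) * s * T a₀) * c⁻¹ := by rw [e]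
        _ = c ^ (-(-(k : ℤ))) * s * (T a₀ * c⁻¹) := by group
        _ = c ^ (-(-(k : ℤ))) * s * (c * ((T (a₀ + 1) ^ 2)⁻¹ * (T a₀ ^ 2)⁻¹) * T a₀) := by
            rw [htc1']
        _ = c ^ (-(-(k : ℤ) - 1)) * ((c⁻¹ * s * c) * ((T (a₀ + 1) ^ 2)⁻¹ * (T a₀ ^ 2)⁻¹))
            * T a₀ := by group
  -- normal form for the generators
  have gen_form : ∀ b : ℤ, ∃ m : ℤ, ∃ s ∈ S, T b = c ^ m * T a₀ * s := by
    have main : ∀ d : ℤ, ∃ m : ℤ, ∃ s ∈ S, T (a₀ + d) = c ^ m * T a₀ * s := by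
      intro d
      induction d using Int.induction_on with
      | zero => exact ⟨0, 1, S.one_mem, by simp⟩
      | succ k ih =>
        obtain ⟨m, s, hs, e⟩ := ih
        obtain ⟨s', hs', e'⟩ := tck (1 - m)
        rw [neg_sub] at e'
        have e_up : T (a₀ + ((k : ℤ) + 1)) = (T (a₀ + (k : ℤ)))⁻¹ * c := by
          have := h (a₀ + (k : ℤ))
          rw [show a₀ + (k : ℤ) + 1 = a₀ + ((k : ℤ) + 1) by ring] at this
          rw [← this]; group
        refine ⟨m - 1, (T a₀)⁻¹ * ((c ^ (1 - m) * (s⁻¹ * (T a₀ ^ 2)⁻¹) * (c ^ (1 - m))⁻¹)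
            * s') * T a₀,
          tconj_inv a₀ _ (S.mul_mem
            (cpow_conj (1 - m) _ (S.mul_mem (S.inv_mem hs) (S.inv_mem (sq_mem a₀)))) hs'),
          ?_⟩
        calc T (a₀ + ((k : ℤ) + 1)) = (c ^ m * T a₀ * s)⁻¹ * c := by rw [e_up, e]
          _ = (s⁻¹ * (T a₀ ^ 2)⁻¹) * (T a₀ * c ^ (1 - m)) := by group
          _ = (s⁻¹ * (T a₀ ^ 2)⁻¹) * (c ^ (m - 1) * s' * T a₀) := by rw [e']
          _ = c ^ (m - 1) * T a₀ * ((T a₀)⁻¹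
              * ((c ^ (1 - m) * (s⁻¹ * (T a₀ ^ 2)⁻¹) * (c ^ (1 - m))⁻¹) * s') * T a₀) := by
              group
      | pred k ih =>
        obtain ⟨m, s, hs, e⟩ := ih
        obtain ⟨s', hs', e'⟩ := tck (-m)
        rw [neg_neg] at e'
        have e_dn : T (a₀ + (-(k : ℤ) - 1)) = c * (T (a₀ + -(k : ℤ)))⁻¹ := by
          have := h (a₀ + (-(k : ℤ) - 1))
          rw [show a₀ + (-(k : ℤ) - 1) + 1 = a₀ + -(k : ℤ) by ring] at this
          rw [← this]; group
        refine ⟨m + 1, (T a₀)⁻¹ * ((c ^ (-m) * (s⁻¹ * (T a₀ ^ 2)⁻¹) * (c ^ (-m))⁻¹)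
            * s') * T a₀,
          tconj_inv a₀ _ (S.mul_mem
            (cpow_conj (-m) _ (S.mul_mem (S.inv_mem hs) (S.inv_mem (sq_mem a₀)))) hs'),
          ?_⟩
        calc T (a₀ + (-(k : ℤ) - 1)) = c * (c ^ m * T a₀ * s)⁻¹ := by rw [e_dn, e]
          _ = c * ((s⁻¹ * (T a₀ ^ 2)⁻¹) * (T a₀ * c ^ (-m))) := by group
          _ = c * ((s⁻¹ * (T a₀ ^ 2)⁻¹) * (c ^ m * s' * T a₀)) := by rw [e']
          _ = c ^ (m + 1) * T a₀ * ((T a₀)⁻¹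
              * ((c ^ (-m) * (s⁻¹ * (T a₀ ^ 2)⁻¹) * (c ^ (-m))⁻¹) * s') * T a₀) := by
              group
    intro b
    obtain ⟨m, s, hs, e⟩ := main (b - a₀)
    rw [show a₀ + (b - a₀) = b by ring] at e
    exact ⟨m, s, hs, e⟩
  -- main induction over the closure
  clear hS
  induction hg using Subgroup.closure_induction with
  | mem x hx =>
    obtain ⟨b, rfl⟩ := hx
    obtain ⟨m, s, hs, e⟩ := gen_form b
    exact ⟨m, s, hs, Or.inr e⟩
  | one => exact ⟨0, 1, S.one_mem, Or.inl (by simp)⟩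
  | mul x y _ _ px py =>
    obtain ⟨m₁, s₁, hs₁, e₁⟩ := px
    obtain ⟨m₂, s₂, hs₂, e₂⟩ := py
    rcases e₁ with e₁ | e₁ <;> rcases e₂ with e₂ | e₂
    · refine ⟨m₁ + m₂, (c ^ (-m₂) * s₁ * (c ^ (-m₂))⁻¹) * s₂,
        S.mul_mem (cpow_conj (-m₂) s₁ hs₁) hs₂, Or.inl ?_⟩
      rw [e₁, e₂]; group
    · refine ⟨m₁ + m₂, ((T a₀)⁻¹ * (c ^ (-m₂) * s₁ * (c ^ (-m₂))⁻¹) * T a₀) * s₂,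
        S.mul_mem (tconj_inv a₀ _ (cpow_conj (-m₂) s₁ hs₁)) hs₂, Or.inr ?_⟩
      rw [e₁, e₂]; group
    · obtain ⟨s', hs', e'⟩ := tck m₂
      refine ⟨m₁ - m₂, ((T a₀)⁻¹ * s' * T a₀)
          * ((c ^ (-m₂) * s₁ * (c ^ (-m₂))⁻¹) * s₂),
        S.mul_mem (tconj_inv a₀ _ hs') (S.mul_mem (cpow_conj (-m₂) s₁ hs₁) hs₂),
        Or.inr ?_⟩
      rw [e₁, e₂]
      calc c ^ m₁ * T a₀ * s₁ * (c ^ m₂ * s₂)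
          = c ^ m₁ * (T a₀ * c ^ m₂) * ((c ^ (-m₂) * s₁ * (c ^ (-m₂))⁻¹) * s₂) := by group
        _ = c ^ m₁ * (c ^ (-m₂) * s' * T a₀) * ((c ^ (-m₂) * s₁ * (c ^ (-m₂))⁻¹) * s₂) := by
            rw [e']
        _ = c ^ (m₁ - m₂) * T a₀ * (((T a₀)⁻¹ * s' * T a₀)
            * ((c ^ (-m₂) * s₁ * (c ^ (-m₂))⁻¹) * s₂)) := by group
    · obtain ⟨s', hs', e'⟩ := tck m₂
      refine ⟨m₁ - m₂, s' * (T a₀ * (c ^ (-m₂) * s₁ * (c ^ (-m₂))⁻¹) * (T a₀)⁻¹)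
          * (T a₀ ^ 2 * s₂),
        S.mul_mem (S.mul_mem hs' (tconj a₀ _ (cpow_conj (-m₂) s₁ hs₁)))
          (S.mul_mem (sq_mem a₀) hs₂),
        Or.inl ?_⟩
      rw [e₁, e₂]
      calc c ^ m₁ * T a₀ * s₁ * (c ^ m₂ * T a₀ * s₂)
          = c ^ m₁ * (T a₀ * c ^ m₂) * ((c ^ (-m₂) * s₁ * (c ^ (-m₂))⁻¹) * (T a₀ * s₂)) := by
            group
        _ = c ^ m₁ * (c ^ (-m₂) * s' * T a₀)
            * ((c ^ (-m₂) * s₁ * (c ^ (-m₂))⁻¹) * (T a₀ * s₂)) := by rw [e']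
        _ = c ^ (m₁ - m₂) * (s' * (T a₀ * (c ^ (-m₂) * s₁ * (c ^ (-m₂))⁻¹) * (T a₀)⁻¹)
            * (T a₀ ^ 2 * s₂)) := by group
  | inv x _ px =>
    obtain ⟨m, s, hs, e⟩ := px
    rcases e with e | e
    · refine ⟨-m, c ^ m * s⁻¹ * (c ^ m)⁻¹, cpow_conj m s⁻¹ (S.inv_mem hs), Or.inl ?_⟩
      rw [e]; group
    · obtain ⟨s', hs', e'⟩ := tck (-m)
      rw [neg_neg] at e'
      refine ⟨m, (T a₀)⁻¹ * ((c ^ (-m) * (s⁻¹ * (T a₀ ^ 2)⁻¹) * (c ^ (-m))⁻¹) * s') * T a₀,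
        tconj_inv a₀ _ (S.mul_mem
          (cpow_conj (-m) _ (S.mul_mem (S.inv_mem hs) (S.inv_mem (sq_mem a₀)))) hs'),
        Or.inr ?_⟩
      rw [e]
      calc (c ^ m * T a₀ * s)⁻¹
          = (s⁻¹ * (T a₀ ^ 2)⁻¹) * (T a₀ * c ^ (-m)) := by group
        _ = (s⁻¹ * (T a₀ ^ 2)⁻¹) * (c ^ m * s' * T a₀) := by rw [e']
        _ = c ^ m * T a₀ * ((T a₀)⁻¹
            * ((c ^ (-m) * (s⁻¹ * (T a₀ ^ 2)⁻¹) * (c ^ (-m))⁻¹) * s') * T a₀) := by group
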